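/- Fix g > 0 and suppose z₀ > √(1 + g²) satisfies f_{z₀}(Σ_{z₀}) = 0, where Σ_{z₀} > 0. Then Σ_{z₀} = 2/(z₀ − g), and the derivative of the map z ↦ f_z(Σ_z) at z = z₀ equals −(z₀ + g) < 0. -/

import Mathlib

open Real Filter Topology


/-- The critical total concentration Σ_z: the unique positive solution of
Σ = 2·e^{−(g+z)Σ/2} (equivalently Σ² = 4·e^{−(g+z)Σ}). -/
noncomputable def sigmaZ (g z : ℝ) : ℝ :=
  sInf {S : ℝ | 0 < S ∧ S = 2 * Real.exp (-((g + z) * S) / 2)}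

/-- f_z(Σ) = (1 + gΣ)·e^{(g+z)Σ} + g² − z². -/
noncomputable def fz (g z S : ℝ) : ℝ :=
  (1 + g * S) * Real.exp ((g + z) * S) + g ^ 2 - z ^ 2

lemma sig_uniq (g z : ℝ) (hz : 0 < g + z) {S T : ℝ}
    (hS : 0 < S ∧ S = 2 * Real.exp (-((g + z) * S) / 2))
    (hT : 0 < T ∧ T = 2 * Real.exp (-((g + z) * T) / 2)) : S = T := by
  obtain ⟨hS0, hSe⟩ := hS
  obtain ⟨hT0, hTe⟩ := hT
  by_contra hne
  have key : ∀ a b : ℝ, 0 < a → a = 2 * Real.exp (-((g + z) * a) / 2) →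
      b = 2 * Real.exp (-((g + z) * b) / 2) → a < b → False := by
    intro a b ha hae hbe hab
    have hexp : Real.exp (-((g + z) * b) / 2) < Real.exp (-((g + z) * a) / 2) := by
      apply Real.exp_lt_exp.mpr
      have : (g + z) * a < (g + z) * b := by nlinarith
      linarith
    linarith
  rcases lt_or_gt_of_ne hne with h | h
  · exact key S T hS0 hSe hTe h
  · exact key T S hT0 hTe hSe h

lemma sig_exists (g z : ℝ) (hz : 0 < g + z) :
    ∃ S : ℝ, 0 < S ∧ S = 2 * Real.exp (-((g + z) * S) / 2) := by
  have hcont : ContinuousOn (fun S : ℝ => S - 2 * Real.exp (-((g + z) * S) / 2))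
      (Set.Icc 0 2) := by fun_prop
  have h02 : (0:ℝ) ≤ 2 := by norm_num
  have hmem : (0:ℝ) ∈ Set.Icc ((fun S : ℝ => S - 2 * Real.exp (-((g + z) * S) / 2)) 0)
      ((fun S : ℝ => S - 2 * Real.exp (-((g + z) * S) / 2)) 2) := by
    constructor
    · simp only
      have : Real.exp (-((g + z) * 0) / 2) = 1 := by norm_num
      rw [this]; norm_num
    · simp only
      have : Real.exp (-((g + z) * 2) / 2) < 1 := by
        rw [show (1:ℝ) = Real.exp 0 by simp]
        apply Real.exp_lt_exp.mpr; linarith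
      linarith
  obtain ⟨S, hSmem, hSeq⟩ := intermediate_value_Icc h02 hcont hmem
  refine ⟨S, ?_, ?_⟩
  · have := Real.exp_pos (-((g + z) * S) / 2)
    simp only at hSeq
    linarith
  · simp only at hSeq; linarith

lemma sigma_spec (g z : ℝ) (hz : 0 < g + z) :
    0 < sigmaZ g z ∧ sigmaZ g z = 2 * Real.exp (-((g + z) * sigmaZ g z) / 2) := by
  obtain ⟨S, hS⟩ := sig_exists g z hz
  have hset : {S' : ℝ | 0 < S' ∧ S' = 2 * Real.exp (-((g + z) * S') / 2)} = {S} := by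
    ext T
    simp only [Set.mem_setOf_eq, Set.mem_singleton_iff]
    exact ⟨fun hT => sig_uniq g z hz hT hS, fun h => h ▸ hS⟩
  rw [sigmaZ, hset, csInf_singleton]
  exact hS

lemma sigma_lt_two (g z : ℝ) (hz : 0 < g + z) : sigmaZ g z < 2 := by
  obtain ⟨h0, he⟩ := sigma_spec g z hz
  have : Real.exp (-((g + z) * sigmaZ g z) / 2) < 1 := by
    rw [show (1:ℝ) = Real.exp 0 by simp]
    apply Real.exp_lt_exp.mpr
    have : 0 < (g + z) * sigmaZ g z := by positivity
    linarith
  linarith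

noncomputable def phiZ (g S : ℝ) : ℝ := -g - 2 * Real.log (S / 2) / S

lemma z_eq_phi (g z : ℝ) (hz : 0 < g + z) : z = phiZ g (sigmaZ g z) := by
  obtain ⟨h0, he⟩ := sigma_spec g z hz
  have hlog : Real.log (sigmaZ g z / 2) = -((g + z) * sigmaZ g z) / 2 := by
    rw [show sigmaZ g z / 2 = Real.exp (-((g + z) * sigmaZ g z) / 2) by linarith]
    exact Real.log_exp _
  rw [phiZ, hlog]
  field_simp
  ring

lemma phi_add_pos (g S : ℝ) (h0 : 0 < S) (h2 : S < 2) : 0 < g + phiZ g S := by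
  have hlog : Real.log (S / 2) < 0 := by
    apply Real.log_neg <;> linarith
  rw [phiZ]
  have : 0 < -(2 * Real.log (S / 2)) / S := by
    apply div_pos <;> linarith
  rw [neg_div] at this
  linarith

lemma sigma_phi (g S : ℝ) (h0 : 0 < S) (h2 : S < 2) : sigmaZ g (phiZ g S) = S := by
  have hz := phi_add_pos g S h0 h2
  apply sig_uniq g (phiZ g S) hz (sigma_spec g _ hz)
  refine ⟨h0, ?_⟩
  have : -((g + phiZ g S) * S) / 2 = Real.log (S / 2) := by
    rw [phiZ]; field_simp; ring
  rw [this, Real.exp_log (by linarith)]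
  ring

lemma sigma_anti (g z₁ z₂ : ℝ) (hz₁ : 0 < g + z₁) (h : z₁ < z₂) :
    sigmaZ g z₂ < sigmaZ g z₁ := by
  have hz₂ : 0 < g + z₂ := by linarith
  obtain ⟨h10, h1e⟩ := sigma_spec g z₁ hz₁
  obtain ⟨h20, h2e⟩ := sigma_spec g z₂ hz₂
  by_contra hc
  push_neg at hc
  have hexp : Real.exp (-((g + z₂) * sigmaZ g z₂) / 2) <
      Real.exp (-((g + z₁) * sigmaZ g z₁) / 2) := by
    apply Real.exp_lt_exp.mpr
    have : (g + z₁) * sigmaZ g z₁ < (g + z₂) * sigmaZ g z₂ := by nlinarith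
    linarith
  linarith

lemma sigma_contAt (g z₀ : ℝ) (hz : 0 < g + z₀) : ContinuousAt (fun z => sigmaZ g z) z₀ := by
  rw [Metric.continuousAt_iff]
  intro ε hε
  obtain ⟨hS0, _⟩ := sigma_spec g z₀ hz
  have hS2 : sigmaZ g z₀ < 2 := sigma_lt_two g z₀ hz
  set S₀ := sigmaZ g z₀ with hS₀def
  set ε' : ℝ := min ε (min (S₀ / 2) ((2 - S₀) / 2)) with hε'def
  have hε' : 0 < ε' := by
    apply lt_min hε
    apply lt_min <;> linarith
  have hε'S : ε' ≤ S₀ / 2 := le_trans (min_le_right _ _) (min_le_left _ _)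
  have hε'2 : ε' ≤ (2 - S₀) / 2 := le_trans (min_le_right _ _) (min_le_right _ _)
  have hε'ε : ε' ≤ ε := min_le_left _ _
  set zp := phiZ g (S₀ + ε') with hzpdef
  set zm := phiZ g (S₀ - ε') with hzmdef
  have hp0 : 0 < S₀ + ε' := by linarith
  have hp2 : S₀ + ε' < 2 := by linarith
  have hm0 : 0 < S₀ - ε' := by linarith
  have hm2 : S₀ - ε' < 2 := by linarith
  have hzp : sigmaZ g zp = S₀ + ε' := sigma_phi g _ hp0 hp2
  have hzm : sigmaZ g zm = S₀ - ε' := sigma_phi g _ hm0 hm2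
  have hgzp : 0 < g + zp := phi_add_pos g _ hp0 hp2
  have hgzm : 0 < g + zm := phi_add_pos g _ hm0 hm2
  have hzpz : zp < z₀ := by
    by_contra hcon
    push_neg at hcon
    rcases eq_or_lt_of_le hcon with h | h
    · have h2 : sigmaZ g z₀ = S₀ + ε' := by rw [h]; exact hzp
      rw [← hS₀def] at h2
      linarith
    · have := sigma_anti g z₀ zp hz h
      rw [hzp, ← hS₀def] at this; linarith
  have hzmz : z₀ < zm := by
    by_contra hcon
    push_neg at hcon
    rcases eq_or_lt_of_le hcon with h | h
    · have h2 : sigmaZ g z₀ = S₀ - ε' := by rw [← h]; exact hzm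
      rw [← hS₀def] at h2
      linarith
    · have := sigma_anti g zm z₀ hgzm h
      rw [hzm, ← hS₀def] at this; linarith
  refine ⟨min (z₀ - zp) (zm - z₀), by apply lt_min <;> linarith, ?_⟩
  intro z hdz
  rw [Real.dist_eq, abs_lt] at hdz
  have hd1 : min (z₀ - zp) (zm - z₀) ≤ z₀ - zp := min_le_left _ _
  have hd2 : min (z₀ - zp) (zm - z₀) ≤ zm - z₀ := min_le_right _ _
  have hz1 : zp < z := by linarith
  have hz2 : z < zm := by linarith
  have a1 : sigmaZ g z < S₀ + ε' := by
    have := sigma_anti g zp z hgzp hz1; rw [hzp] at this; linarith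
  have a2 : S₀ - ε' < sigmaZ g z := by
    have := sigma_anti g z zm (by linarith) hz2; rw [hzm] at this; linarith
  rw [Real.dist_eq, abs_lt]
  constructor <;> linarith

lemma phi_hasDeriv (g S₀ : ℝ) (h0 : 0 < S₀) :
    HasDerivAt (phiZ g) (2 * (Real.log (S₀ / 2) - 1) / S₀ ^ 2) S₀ := by
  have h1 : HasDerivAt (fun S : ℝ => Real.log (S / 2)) (1 / S₀) S₀ := by
    have h2 : HasDerivAt (fun S : ℝ => S / 2) (1 / 2) S₀ := (hasDerivAt_id S₀).div_const 2
    have h3 := (Real.hasDerivAt_log (by positivity : S₀ / 2 ≠ 0)).comp S₀ h2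
    refine h3.congr_deriv ?_
    field_simp
  have h4 : HasDerivAt (fun S : ℝ => 2 * Real.log (S / 2)) (2 * (1 / S₀)) S₀ := h1.const_mul 2
  have h5 : HasDerivAt (fun S : ℝ => 2 * Real.log (S / 2) / S)
      ((2 * (1 / S₀) * S₀ - 2 * Real.log (S₀ / 2) * 1) / S₀ ^ 2) S₀ :=
    h4.div (hasDerivAt_id S₀) (ne_of_gt h0)
  have h6 := (hasDerivAt_const S₀ (-g)).sub h5
  refine h6.congr_deriv ?_
  field_simp
  ring

lemma exp_eq_sq (g z : ℝ) (hz : 0 < g + z) :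
    Real.exp ((g + z) * sigmaZ g z) = (2 / sigmaZ g z) ^ 2 := by
  obtain ⟨h0, he⟩ := sigma_spec g z hz
  have hhalf : Real.exp ((g + z) * sigmaZ g z / 2) = 2 / sigmaZ g z := by
    have : Real.exp (-((g + z) * sigmaZ g z) / 2) = sigmaZ g z / 2 := by linarith
    rw [show (g + z) * sigmaZ g z / 2 = -(-((g + z) * sigmaZ g z) / 2) by ring,
      Real.exp_neg, this]
    rw [inv_div]
  rw [show (g + z) * sigmaZ g z = (g + z) * sigmaZ g z / 2 + (g + z) * sigmaZ g z / 2 by ring,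
    Real.exp_add, hhalf]
  ring

/-- if z₀ > √(1+g²) satisfies f_{z₀}(Σ_{z₀}) = 0 with Σ_{z₀} > 0, then
Σ_{z₀} = 2/(z₀ − g) and the derivative of z ↦ f_z(Σ_z) at z₀ equals −(z₀ + g) < 0. -/
theorem stmt_6 (g z₀ : ℝ) (hg : 0 < g) (hz₀ : Real.sqrt (1 + g ^ 2) < z₀)
    (hpos : 0 < sigmaZ g z₀) (hzero : fz g z₀ (sigmaZ g z₀) = 0) :
    sigmaZ g z₀ = 2 / (z₀ - g) ∧
    HasDerivAt (fun z => fz g z (sigmaZ g z)) (-(z₀ + g)) z₀ ∧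
    -(z₀ + g) < 0 := by
  have hgz : g < z₀ := by
    nlinarith [Real.sq_sqrt (show (0:ℝ) ≤ 1 + g ^ 2 by positivity),
      Real.sqrt_nonneg (1 + g ^ 2)]
  have hz0 : 0 < z₀ := lt_of_le_of_lt hg.le hgz
  have hz : 0 < g + z₀ := by linarith
  obtain ⟨hS0, hSe⟩ := sigma_spec g z₀ hz
  set S₀ := sigmaZ g z₀ with hS₀def
  have hexp : Real.exp ((g + z₀) * S₀) = (2 / S₀) ^ 2 := exp_eq_sq g z₀ hz
  -- Part 1
  have hpoly : (z₀ ^ 2 - g ^ 2) * S₀ ^ 2 - 4 * g * S₀ - 4 = 0 := by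
    rw [fz, hexp] at hzero
    have hS0' : S₀ ≠ 0 := ne_of_gt hS0
    field_simp at hzero
    nlinarith [hzero]
  have hfac : ((z₀ - g) * S₀ - 2) * ((z₀ + g) * S₀ + 2) = 0 := by nlinarith
  have hpos2 : 0 < (z₀ + g) * S₀ + 2 := by positivity
  have hkey : (z₀ - g) * S₀ = 2 := by
    rcases mul_eq_zero.mp hfac with h | h
    · linarith
    · linarith
  have part1 : S₀ = 2 / (z₀ - g) := by
    rw [eq_div_iff (by linarith : z₀ - g ≠ 0)]
    linarith
  -- log value
  have hlog : Real.log (S₀ / 2) = -((g + z₀) * S₀) / 2 := by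
    rw [show S₀ / 2 = Real.exp (-((g + z₀) * S₀) / 2) by linarith]
    exact Real.log_exp _
  -- derivative of phi at S₀
  have hphi : HasDerivAt (phiZ g) (-(z₀ * (z₀ - g))) S₀ := by
    have h := phi_hasDeriv g S₀ hS0
    convert h using 1
    rw [hlog]
    have h2 : S₀ = 2 / (z₀ - g) := part1
    rw [h2]
    have : z₀ - g ≠ 0 := by linarith
    field_simp
    ring
  -- derivative of sigmaZ at z₀ via inverse function
  have hne : (-(z₀ * (z₀ - g))) ≠ 0 := by
    have : 0 < z₀ * (z₀ - g) := mul_pos hz0 (by linarith)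
    linarith
  have hphiS : phiZ g (sigmaZ g z₀) = phiZ g S₀ := rfl
  have hev : ∀ᶠ y in 𝓝 z₀, phiZ g ((fun z => sigmaZ g z) y) = y := by
    have h := eventually_gt_nhds (show -g < z₀ by linarith)
    filter_upwards [h] with y hy
    exact (z_eq_phi g y (by linarith)).symm
  have hsig : HasDerivAt (fun z => sigmaZ g z) (-(z₀ * (z₀ - g)))⁻¹ z₀ :=
    HasDerivAt.of_local_left_inverse (sigma_contAt g z₀ hz) hphi hne hev
  -- the auxiliary function G
  set h' : ℝ := (-(z₀ * (z₀ - g)))⁻¹ with hh'def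
  have hG : HasDerivAt (fun z => 4 / (sigmaZ g z) ^ 2 + 4 * g / (sigmaZ g z) + g ^ 2 - z ^ 2)
      ((0 * S₀ ^ 2 - 4 * (2 * S₀ ^ 1 * h')) / (S₀ ^ 2) ^ 2
        + (0 * S₀ - 4 * g * h') / S₀ ^ 2 + 0 - 2 * z₀ ^ 1) z₀ := by
    have t1 : HasDerivAt (fun z => 4 / (sigmaZ g z) ^ 2)
        ((0 * S₀ ^ 2 - 4 * (2 * S₀ ^ 1 * h')) / (S₀ ^ 2) ^ 2) z₀ :=
      (hasDerivAt_const z₀ (4:ℝ)).div (hsig.pow 2) (by positivity)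
    have t2 : HasDerivAt (fun z => 4 * g / (sigmaZ g z))
        ((0 * S₀ - 4 * g * h') / S₀ ^ 2) z₀ :=
      (hasDerivAt_const z₀ (4*g)).div hsig (ne_of_gt hS0)
    exact ((t1.add t2).add (hasDerivAt_const z₀ (g ^ 2))).sub (hasDerivAt_pow 2 z₀)
  -- F = G eventually
  have hFG : (fun z => fz g z (sigmaZ g z)) =ᶠ[𝓝 z₀]
      (fun z => 4 / (sigmaZ g z) ^ 2 + 4 * g / (sigmaZ g z) + g ^ 2 - z ^ 2) := by
    have h := eventually_gt_nhds (show -g < z₀ by linarith)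
    filter_upwards [h] with y hy
    have hzy : 0 < g + y := by linarith
    obtain ⟨hy0, _⟩ := sigma_spec g y hzy
    rw [fz, exp_eq_sq g y hzy]
    have : sigmaZ g y ≠ 0 := ne_of_gt hy0
    field_simp
    ring
  -- final derivative value
  have hval : (0 * S₀ ^ 2 - 4 * (2 * S₀ ^ 1 * h')) / (S₀ ^ 2) ^ 2
      + (0 * S₀ - 4 * g * h') / S₀ ^ 2 + 0 - 2 * z₀ ^ 1 = -(z₀ + g) := by
    rw [hh'def, part1]
    have h1 : z₀ - g ≠ 0 := by linarith
    have h2 : z₀ ≠ 0 := ne_of_gt hz0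
    field_simp
    ring
  refine ⟨part1, ?_, by linarith⟩
  have := hG.congr_of_eventuallyEq hFG
  rw [hval] at this
  exact this
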